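/- Let E be a finite ground set, (𝒫,⪯) a submodular, consecutive lattice of subsets of E, and π : 𝒫 → (−∞,1] monotone and supermodular w.r.t. the lattice. Let ρ be an extreme point of Y⁺ with greedy support e_1,…,e_m, P_1,…,P_m, and let S ⊆ E fulfil condition (good-S) for this greedy support. Define ε := ε_{π,ρ}(S), π̄_P := π_P − ε for P ∈ 𝒫, and ρ̄_e := ρ_e − 1[e∈S]·ε for e ∈ E. Then π̄ is supermodular and monotone w.r.t. the lattice, and ρ̄ is an extreme point of the polyhedron Ȳ⁺ := {y ∈ ℝ^E_{≥0} : Σ_{e∈P} y_e ≥ π̄_P for all P ∈ 𝒫}. -/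

import Mathlib

open Finset

variable {α : Type*} [Fintype α] [DecidableEq α]

/-- A submodular, consecutive lattice `(PP, ⪯)` of subsets of the finite ground set `E = α`:
a partial order `le` on the collection `sets` in which every pair has a meet (greatest common
lower bound) and a join (least common upper bound), satisfying submodularity (SM) and
consecutivity (CS). -/
structure SubmodConsecLattice (α : Type*) [Fintype α] [DecidableEq α] where
  sets : Finset (Finset α)
  le : Finset α → Finset α → Prop
  meet : Finset α → Finset α → Finset α
  join : Finset α → Finset α → Finset α
  le_refl : ∀ P ∈ sets, le P P
  le_antisymm : ∀ P ∈ sets, ∀ Q ∈ sets, le P Q → le Q P → P = Q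
  le_trans : ∀ P ∈ sets, ∀ Q ∈ sets, ∀ R ∈ sets, le P Q → le Q R → le P R
  meet_mem : ∀ P ∈ sets, ∀ Q ∈ sets, meet P Q ∈ sets
  meet_le_left : ∀ P ∈ sets, ∀ Q ∈ sets, le (meet P Q) P
  meet_le_right : ∀ P ∈ sets, ∀ Q ∈ sets, le (meet P Q) Q
  le_meet : ∀ P ∈ sets, ∀ Q ∈ sets, ∀ R ∈ sets, le R P → le R Q → le R (meet P Q)
  join_mem : ∀ P ∈ sets, ∀ Q ∈ sets, join P Q ∈ sets
  left_le_join : ∀ P ∈ sets, ∀ Q ∈ sets, le P (join P Q)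
  right_le_join : ∀ P ∈ sets, ∀ Q ∈ sets, le Q (join P Q)
  join_le : ∀ P ∈ sets, ∀ Q ∈ sets, ∀ R ∈ sets, le P R → le Q R → le (join P Q) R
  /-- submodularity (SM): `1[e ∈ P∨Q] + 1[e ∈ P∧Q] ≤ 1[e ∈ P] + 1[e ∈ Q]`. -/
  submod : ∀ P ∈ sets, ∀ Q ∈ sets, ∀ e : α,
    (if e ∈ join P Q then (1 : ℕ) else 0) + (if e ∈ meet P Q then 1 else 0) ≤
      (if e ∈ P then 1 else 0) + (if e ∈ Q then 1 else 0)
  /-- consecutivity (CS): `P ∩ R ⊆ Q` whenever `P ≺ Q ≺ R`. -/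
  consec : ∀ P ∈ sets, ∀ Q ∈ sets, ∀ R ∈ sets,
    le P Q → P ≠ Q → le Q R → Q ≠ R → P ∩ R ⊆ Q

/-- `y` lies in the polyhedron `Y⁺ = {y ∈ ℝ^E_{≥0} : ∑_{e ∈ P} y e ≥ π P for all P ∈ PP}`. -/
def MemYplus (PP : Finset (Finset α)) (π : Finset α → ℝ) (y : α → ℝ) : Prop :=
  (∀ e, 0 ≤ y e) ∧ ∀ P ∈ PP, π P ≤ ∑ e ∈ P, y e

/-- `ρ` is an extreme point of `Y⁺`: it lies in `Y⁺` and does not lie in the open segment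
between two distinct points of `Y⁺`. -/
def IsExtremePt (PP : Finset (Finset α)) (π : Finset α → ℝ) (ρ : α → ℝ) : Prop :=
  MemYplus PP π ρ ∧ ∀ y1 y2 : α → ℝ, MemYplus PP π y1 → MemYplus PP π y2 →
    ∀ t : ℝ, 0 < t → t < 1 → (∀ e, ρ e = t * y1 e + (1 - t) * y2 e) → y1 = y2

/-- `es, Ps` form a greedy support for `ρ ∈ Y⁺`: (G1) `es i ∈ Ps i`; (G2) `Ps i` is the
`⪯`-maximum of `{P ∈ PP : P ⊆ E ∖ {es 0, …, es (i-1)}}`; (G3) `π (Ps i) > 0` for all `i` and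
`π Q ≤ 0` for all `Q ∈ PP` avoiding all `es i`; (G4) `ρ` is the unique solution of the
corresponding linear system. -/
def IsGreedySupport (PP : Finset (Finset α)) (le : Finset α → Finset α → Prop)
    (π : Finset α → ℝ) (ρ : α → ℝ) (m : ℕ) (es : Fin m → α) (Ps : Fin m → Finset α) : Prop :=
  (∀ i, es i ∈ Ps i) ∧
  (∀ i, Ps i ∈ PP ∧ (∀ j, j < i → es j ∉ Ps i) ∧
    ∀ P ∈ PP, (∀ j, j < i → es j ∉ P) → le P (Ps i)) ∧
  (∀ i, 0 < π (Ps i)) ∧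
  (∀ Q ∈ PP, (∀ i, es i ∉ Q) → π Q ≤ 0) ∧
  ((∀ i, ∑ x ∈ Ps i, ρ x = π (Ps i)) ∧ (∀ x, (∀ i, x ≠ es i) → ρ x = 0)) ∧
  (∀ ρ' : α → ℝ, (∀ i, ∑ x ∈ Ps i, ρ' x = π (Ps i)) → (∀ x, (∀ i, x ≠ es i) → ρ' x = 0) →
    ρ' = ρ)

/-- `S` fulfils condition (good-S) for the greedy support `Ps`: `S ⊆ E_ρ` and `|S ∩ Ps i| = 1`
for all `i`. -/
def GoodS (ρ : α → ℝ) {m : ℕ} (Ps : Fin m → Finset α) (S : Finset α) : Prop :=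
  (∀ e ∈ S, 0 < ρ e) ∧ ∀ i, (S ∩ Ps i).card = 1

/-- The step size `ε_{π,ρ}(S)`: the minimum of `min_{e ∈ S} ρ e`, `max_{P ∈ PP} π P`, and
`δ_{π,ρ}(S) = inf{(π P − ∑_{e∈P} ρ e)/(1 − |P ∩ S|) : P ∈ PP, |P ∩ S| > 1}` (the latter set of
values being empty if no such `P` exists). -/
noncomputable def epsVal (PP : Finset (Finset α)) (π : Finset α → ℝ) (ρ : α → ℝ)
    (S : Finset α) : ℝ :=
  sInf (ρ '' (S : Set α) ∪ {sSup (π '' (PP : Set (Finset α)))} ∪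
    {x : ℝ | ∃ P ∈ PP, 1 < (P ∩ S).card ∧
      x = (π P - ∑ e ∈ P, ρ e) / (1 - ((P ∩ S).card : ℝ))})

/-- Subtracting `ε := ε_{π,ρ}(S)` from `π`, and from `ρ` on `S`, preserves supermodularity,
monotonicity, and extremality: `π̄` is supermodular and monotone w.r.t. the lattice and `ρ̄` is an
extreme point of `Ȳ⁺ = {y ∈ ℝ^E_{≥0} : ∑_{e∈P} y e ≥ π̄ P for all P ∈ PP}`. -/
theorem lattice_residual_extreme_point (L : SubmodConsecLattice α) (π : Finset α → ℝ)
    (hπ1 : ∀ P ∈ L.sets, π P ≤ 1)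
    (hsup : ∀ P ∈ L.sets, ∀ Q ∈ L.sets, π P + π Q ≤ π (L.join P Q) + π (L.meet P Q))
    (hmono : ∀ P ∈ L.sets, ∀ Q ∈ L.sets, L.le P Q → π P ≤ π Q)
    (ρ : α → ℝ) (hext : IsExtremePt L.sets π ρ)
    (m : ℕ) (es : Fin m → α) (Ps : Fin m → Finset α)
    (hgs : IsGreedySupport L.sets L.le π ρ m es Ps)
    (S : Finset α) (hS : GoodS ρ Ps S) :
    (∀ P ∈ L.sets, ∀ Q ∈ L.sets,
      (π P - epsVal L.sets π ρ S) + (π Q - epsVal L.sets π ρ S) ≤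
        (π (L.join P Q) - epsVal L.sets π ρ S) + (π (L.meet P Q) - epsVal L.sets π ρ S)) ∧
    (∀ P ∈ L.sets, ∀ Q ∈ L.sets, L.le P Q →
      π P - epsVal L.sets π ρ S ≤ π Q - epsVal L.sets π ρ S) ∧
    IsExtremePt L.sets (fun P => π P - epsVal L.sets π ρ S)
      (fun e => ρ e - (if e ∈ S then epsVal L.sets π ρ S else 0)) := by
  obtain ⟨⟨hρ0, hρY⟩, hextr⟩ := hext
  obtain ⟨hG1, hG2, hG3pos, hG3neg, ⟨hsol1, hsol2⟩, huniq⟩ := hgs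
  obtain ⟨hSpos, hScard⟩ := hS
  set ε := epsVal L.sets π ρ S with hεdef
  -- the set whose infimum is ε
  set T : Set ℝ := ρ '' (S : Set α) ∪ {sSup (π '' (L.sets : Set (Finset α)))} ∪
    {x : ℝ | ∃ P ∈ L.sets, 1 < (P ∩ S).card ∧
      x = (π P - ∑ e ∈ P, ρ e) / (1 - ((P ∩ S).card : ℝ))} with hTdef
  have hεT : ε = sInf T := rfl
  have hne : T.Nonempty := ⟨sSup (π '' (L.sets : Set (Finset α))), Or.inl (Or.inr rfl)⟩
  have hbdd : BddBelow T := by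
    refine ⟨min 0 (sSup (π '' (L.sets : Set (Finset α)))), ?_⟩
    rintro x ((hx | hx) | hx)
    · obtain ⟨e, _, rfl⟩ := hx
      exact le_trans (min_le_left _ _) (hρ0 e)
    · rw [Set.mem_singleton_iff] at hx
      rw [hx]; exact min_le_right _ _
    · obtain ⟨P, hP, hc, rfl⟩ := hx
      refine le_trans (min_le_left _ _) ?_
      have h1 : (1:ℝ) < ((P ∩ S).card : ℝ) := by exact_mod_cast hc
      rw [le_div_iff_of_neg (by linarith)]
      have := hρY P hP
      nlinarith
  have hεle : ∀ e ∈ S, ε ≤ ρ e := fun e he =>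
    csInf_le hbdd (Or.inl (Or.inl ⟨e, he, rfl⟩))
  have hεdelta : ∀ P ∈ L.sets, 1 < (P ∩ S).card →
      ε ≤ (π P - ∑ e ∈ P, ρ e) / (1 - ((P ∩ S).card : ℝ)) := fun P hP hc =>
    csInf_le hbdd (Or.inr ⟨P, hP, hc, rfl⟩)
  have hεlb : ∀ P ∈ L.sets, π P - ∑ e ∈ P, ρ e ≤ ε := by
    intro P hP
    refine le_csInf hne ?_
    rintro x ((hx | hx) | hx)
    · obtain ⟨e, _, rfl⟩ := hx
      have := hρ0 e
      have hs : (0:ℝ) ≤ ∑ e ∈ P, ρ e := Finset.sum_nonneg fun e _ => hρ0 e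
      linarith [hρY P hP]
    · rw [Set.mem_singleton_iff] at hx
      rw [hx]
      have hba : BddAbove (π '' (L.sets : Set (Finset α))) :=
        (L.sets.finite_toSet.image π).bddAbove
      have : π P ≤ sSup (π '' (L.sets : Set (Finset α))) := le_csSup hba ⟨P, hP, rfl⟩
      have hs : (0:ℝ) ≤ ∑ e ∈ P, ρ e := Finset.sum_nonneg fun e _ => hρ0 e
      linarith
    · obtain ⟨Q, hQ, hc, rfl⟩ := hx
      have h1 : (1:ℝ) < ((Q ∩ S).card : ℝ) := by exact_mod_cast hc
      have hd : (0:ℝ) ≤ (π Q - ∑ e ∈ Q, ρ e) / (1 - ((Q ∩ S).card : ℝ)) := by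
        rw [le_div_iff_of_neg (by linarith)]
        nlinarith [hρY Q hQ]
      have hs : (0:ℝ) ≤ ∑ e ∈ P, ρ e := Finset.sum_nonneg fun e _ => hρ0 e
      linarith [hρY P hP]
  have hsumS : ∀ P : Finset α, ∑ e ∈ P, (if e ∈ S then ε else 0) = ((P ∩ S).card : ℝ) * ε := by
    intro P
    rw [Finset.sum_ite_mem, Finset.sum_const, nsmul_eq_mul]
  have hsumsub : ∀ P : Finset α,
      ∑ e ∈ P, (ρ e - if e ∈ S then ε else 0) = (∑ e ∈ P, ρ e) - ((P ∩ S).card : ℝ) * ε := by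
    intro P
    rw [Finset.sum_sub_distrib, hsumS]
  have hmem : MemYplus L.sets (fun P => π P - ε)
      (fun e => ρ e - (if e ∈ S then ε else 0)) := by
    constructor
    · intro e
      by_cases he : e ∈ S
      · simp only [he, if_true]
        linarith [hεle e he]
      · simp only [he, if_false]
        linarith [hρ0 e]
    · intro P hP
      simp only
      rw [hsumsub]
      rcases Nat.lt_or_ge 1 (P ∩ S).card with hc | hc
      · have h1 : (1:ℝ) < ((P ∩ S).card : ℝ) := by exact_mod_cast hc
        have := hεdelta P hP hc
        rw [le_div_iff_of_neg (by linarith)] at this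
        nlinarith
      · interval_cases h : (P ∩ S).card
        · push_cast
          linarith [hεlb P hP]
        · push_cast
          linarith [hρY P hP]
  refine ⟨fun P hP Q hQ => by linarith [hsup P hP Q hQ],
    fun P hP Q hQ h => by linarith [hmono P hP Q hQ h], hmem, ?_⟩
  intro y1 y2 hy1 hy2 t ht0 ht1 hcomb
  simp only at hcomb
  have hzero : ∀ x, (∀ i, x ≠ es i) → y1 x = 0 ∧ y2 x = 0 := by
    intro x hx
    have hρx : ρ x = 0 := hsol2 x hx
    have hxS : x ∉ S := by
      intro hxS
      have := hSpos x hxS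
      linarith
    have h := hcomb x
    rw [hρx, if_neg hxS] at h
    constructor <;> nlinarith [hy1.1 x, hy2.1 x]
  have hbind : ∀ i, ∑ x ∈ Ps i, y1 x = π (Ps i) - ε ∧ ∑ x ∈ Ps i, y2 x = π (Ps i) - ε := by
    intro i
    have hPi := (hG2 i).1
    have hs1 := hy1.2 (Ps i) hPi
    have hs2 := hy2.2 (Ps i) hPi
    simp only at hs1 hs2
    have hcs : ∑ x ∈ Ps i, (ρ x - if x ∈ S then ε else 0) =
        t * ∑ x ∈ Ps i, y1 x + (1 - t) * ∑ x ∈ Ps i, y2 x := by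
      rw [Finset.mul_sum, Finset.mul_sum, ← Finset.sum_add_distrib]
      exact Finset.sum_congr rfl fun x _ => hcomb x
    have hsum : ∑ x ∈ Ps i, (ρ x - if x ∈ S then ε else 0) = π (Ps i) - ε := by
      rw [hsumsub, hsol1 i]
      have hc1 : (Ps i ∩ S).card = 1 := by rw [Finset.inter_comm]; exact hScard i
      rw [hc1]
      push_cast
      ring
    constructor <;> nlinarith
  have key : ∀ y : α → ℝ, MemYplus L.sets (fun P => π P - ε) y →
      (∀ i, ∑ x ∈ Ps i, y x = π (Ps i) - ε) → (∀ x, (∀ i, x ≠ es i) → y x = 0) →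
      (fun x => y x + if x ∈ S then ε else 0) = ρ := by
    intro y _ hb hz
    apply huniq
    · intro i
      rw [Finset.sum_add_distrib, hb i, hsumS]
      have hc1 : (Ps i ∩ S).card = 1 := by rw [Finset.inter_comm]; exact hScard i
      rw [hc1]
      push_cast
      ring
    · intro x hx
      have hxS : x ∉ S := by
        intro hxS
        have := hSpos x hxS
        have := hsol2 x hx
        linarith
      rw [if_neg hxS, hz x hx, add_zero]
  have h1 := key y1 hy1 (fun i => (hbind i).1) (fun x hx => (hzero x hx).1)
  have h2 := key y2 hy2 (fun i => (hbind i).2) (fun x hx => (hzero x hx).2)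
  funext x
  have e1 := congrFun h1 x
  have e2 := congrFun h2 x
  linarith [e1, e2]
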